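/- Let M ⊆ ℂ be an open set, K a topological space, and F and E complex Banach spaces. Let s ↦ T_s be a family of continuous linear operators F → E indexed by s ∈ M such that for every f ∈ F the map s ↦ T_s(f) is holomorphic on M. Let (s,k) ↦ f_{s,k} ∈ F be a continuous map on M × K which is holomorphic in s for each fixed k ∈ K. Then the map (s,k) ↦ T_s(f_{s,k}) ∈ E is continuous on M × K and holomorphic in s for each fixed k ∈ K. -/

import Mathlib

noncomputable section

open Metric Set

/-- A pointwise holomorphic family of operators is holomorphic in operator norm. -/
theorem holo_clm {F E : Type*}
    [NormedAddCommGroup F] [NormedSpace ℂ F] [CompleteSpace F]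
    [NormedAddCommGroup E] [NormedSpace ℂ E] [CompleteSpace E]
    (M : Set ℂ) (hM : IsOpen M)
    (T : ℂ → F →L[ℂ] E)
    (hT : ∀ f : F, DifferentiableOn ℂ (fun s => T s f) M) :
    DifferentiableOn ℂ T M := by
  intro s₀ hs₀
  refine DifferentiableAt.differentiableWithinAt ?_
  -- choose a closed ball inside M
  obtain ⟨r, hr, hrM⟩ := Metric.isOpen_iff.1 hM s₀ hs₀
  set ρ : ℝ := r / 2 with hρdef
  have hρ : 0 < ρ := by positivity
  have hcb : closedBall s₀ ρ ⊆ M := fun z hz => hrM (mem_ball.2 (lt_of_le_of_lt (mem_closedBall.1 hz) (by rw [hρdef]; linarith)))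
  have hs₀cb : s₀ ∈ closedBall s₀ ρ := mem_closedBall_self hρ.le
  -- uniform bound via Banach-Steinhaus
  obtain ⟨C₀, hC₀⟩ : ∃ C', ∀ i : closedBall s₀ ρ, ‖T i‖ ≤ C' := by
    apply banach_steinhaus
    intro f
    obtain ⟨C, hC⟩ := (isCompact_closedBall s₀ ρ).exists_bound_of_continuousOn
      (((hT f).continuousOn).mono hcb)
    exact ⟨C, fun i => hC i i.2⟩
  set C : ℝ := max C₀ 0 with hCdef
  have hCnn : 0 ≤ C := le_max_right _ _
  have hTC : ∀ z ∈ closedBall s₀ ρ, ∀ f : F, ‖T z f‖ ≤ C * ‖f‖ := fun z hz f =>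
    ((T z).le_opNorm f).trans (mul_le_mul_of_nonneg_right ((hC₀ ⟨z, hz⟩).trans (le_max_left _ _))
      (norm_nonneg f))
  -- dslopes are holomorphic
  have hMnhds : M ∈ nhds s₀ := hM.mem_nhds hs₀
  have hd1 : ∀ f : F, DifferentiableOn ℂ (dslope (fun s => T s f) s₀) M := fun f =>
    (Complex.differentiableOn_dslope hMnhds).2 (hT f)
  have hd2 : ∀ f : F, DifferentiableOn ℂ (dslope (dslope (fun s => T s f) s₀) s₀) M := fun f =>
    (Complex.differentiableOn_dslope hMnhds).2 (hd1 f)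
  have hclos : closure (ball s₀ ρ) = closedBall s₀ ρ := closure_ball s₀ hρ.ne'
  have hfront : frontier (ball s₀ ρ) = sphere s₀ ρ := frontier_ball s₀ hρ.ne'
  -- maximum principle helper
  have maxp : ∀ (g : ℂ → E) (B : ℝ), DifferentiableOn ℂ g M →
      (∀ w ∈ sphere s₀ ρ, ‖g w‖ ≤ B) → ∀ z ∈ closedBall s₀ ρ, ‖g z‖ ≤ B := by
    intro g B hg hB z hz
    have : DiffContOnCl ℂ g (ball s₀ ρ) := by
      apply DifferentiableOn.diffContOnCl
      rw [hclos]; exact hg.mono hcb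
    exact Complex.norm_le_of_forall_mem_frontier_norm_le isBounded_ball this
      (by rw [hfront]; exact hB) (hclos ▸ hz)
  -- bound on first dslope
  have hb1 : ∀ (f : F), ∀ z ∈ closedBall s₀ ρ,
      ‖dslope (fun s => T s f) s₀ z‖ ≤ 2 * C / ρ * ‖f‖ := by
    intro f
    apply maxp _ _ (hd1 f)
    intro w hw
    have hwρ : ‖w - s₀‖ = ρ := mem_sphere_iff_norm.1 hw
    have hwne : w ≠ s₀ := by
      intro h; rw [h] at hwρ; simp at hwρ; exact hρ.ne' hwρ.symm
    have hwcb : w ∈ closedBall s₀ ρ := sphere_subset_closedBall hw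
    rw [dslope_of_ne _ hwne, slope_def_module, norm_smul, norm_inv, hwρ]
    have : ‖T w f - T s₀ f‖ ≤ 2 * C * ‖f‖ := by
      calc ‖T w f - T s₀ f‖ ≤ ‖T w f‖ + ‖T s₀ f‖ := norm_sub_le _ _
        _ ≤ C * ‖f‖ + C * ‖f‖ := add_le_add (hTC w hwcb f) (hTC s₀ hs₀cb f)
        _ = 2 * C * ‖f‖ := by ring
    calc ρ⁻¹ * ‖T w f - T s₀ f‖ ≤ ρ⁻¹ * (2 * C * ‖f‖) := by
          exact mul_le_mul_of_nonneg_left this (by positivity)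
      _ = 2 * C / ρ * ‖f‖ := by field_simp
  -- bound on second dslope
  have hb2 : ∀ (f : F), ∀ z ∈ closedBall s₀ ρ,
      ‖dslope (dslope (fun s => T s f) s₀) s₀ z‖ ≤ 4 * C / ρ ^ 2 * ‖f‖ := by
    intro f
    apply maxp _ _ (hd2 f)
    intro w hw
    have hwρ : ‖w - s₀‖ = ρ := mem_sphere_iff_norm.1 hw
    have hwne : w ≠ s₀ := by
      intro h; rw [h] at hwρ; simp at hwρ; exact hρ.ne' hwρ.symm
    have hwcb : w ∈ closedBall s₀ ρ := sphere_subset_closedBall hw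
    rw [dslope_of_ne _ hwne, slope_def_module, norm_smul, norm_inv, hwρ]
    have h1 := hb1 f w hwcb
    have h2 := hb1 f s₀ hs₀cb
    have : ‖dslope (fun s => T s f) s₀ w - dslope (fun s => T s f) s₀ s₀‖ ≤ 4 * C / ρ * ‖f‖ := by
      calc _ ≤ ‖dslope (fun s => T s f) s₀ w‖ + ‖dslope (fun s => T s f) s₀ s₀‖ := norm_sub_le _ _
        _ ≤ 2 * C / ρ * ‖f‖ + 2 * C / ρ * ‖f‖ := add_le_add h1 h2
        _ = 4 * C / ρ * ‖f‖ := by ring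
    calc ρ⁻¹ * ‖_ - _‖ ≤ ρ⁻¹ * (4 * C / ρ * ‖f‖) :=
          mul_le_mul_of_nonneg_left this (by positivity)
      _ = 4 * C / ρ ^ 2 * ‖f‖ := by rw [pow_two]; field_simp
  -- differentiability at s₀ of s ↦ T s f
  have hdf : ∀ g : F, DifferentiableAt ℂ (fun s => T s g) s₀ := fun g =>
    ((hT g) s₀ hs₀).differentiableAt hMnhds
  -- the candidate derivative
  set D₀ : F →ₗ[ℂ] E :=
    { toFun := fun g => deriv (fun s => T s g) s₀
      map_add' := by
        intro g₁ g₂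
        have h : (fun s => T s (g₁ + g₂)) = fun s => T s g₁ + T s g₂ := by
          funext s; simp
        show deriv (fun s => T s (g₁ + g₂)) s₀
            = deriv (fun s => T s g₁) s₀ + deriv (fun s => T s g₂) s₀
        rw [h, deriv_fun_add (hdf g₁) (hdf g₂)]
      map_smul' := by
        intro c g
        have h : (fun s => T s (c • g)) = fun s => c • T s g := by
          funext s; simp
        show deriv (fun s => T s (c • g)) s₀ = c • deriv (fun s => T s g) s₀
        rw [h, deriv_fun_const_smul c (hdf g)] } with hD₀def
  have hD₀norm : ∀ g : F, ‖D₀ g‖ ≤ 2 * C / ρ * ‖g‖ := by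
    intro g
    have := hb1 g s₀ hs₀cb
    rwa [dslope_same] at this
  set D : F →L[ℂ] E := D₀.mkContinuous (2 * C / ρ) hD₀norm with hDdef
  -- the key quadratic estimate
  have key : ∀ z ∈ closedBall s₀ ρ, ‖T z - T s₀ - (z - s₀) • D‖ ≤ 4 * C / ρ ^ 2 * ‖z - s₀‖ ^ 2 := by
    intro z hz
    apply ContinuousLinearMap.opNorm_le_bound _ (by positivity)
    intro g
    have happ : (T z - T s₀ - (z - s₀) • D) g
        = (z - s₀) • ((z - s₀) • dslope (dslope (fun s => T s g) s₀) s₀ z) := by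
      have e1 : (z - s₀) • dslope (fun s => T s g) s₀ z = T z g - T s₀ g :=
        sub_smul_dslope _ _ _
      have e2 : (z - s₀) • dslope (dslope (fun s => T s g) s₀) s₀ z
          = dslope (fun s => T s g) s₀ z - dslope (fun s => T s g) s₀ s₀ :=
        sub_smul_dslope _ _ _
      have e3 : D g = dslope (fun s => T s g) s₀ s₀ := (dslope_same _ _).symm
      simp only [ContinuousLinearMap.sub_apply, ContinuousLinearMap.smul_apply]
      rw [e2, smul_sub, e1, e3]
    rw [happ, norm_smul, norm_smul]
    calc ‖z - s₀‖ * (‖z - s₀‖ * ‖dslope (dslope (fun s => T s g) s₀) s₀ z‖)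
        ≤ ‖z - s₀‖ * (‖z - s₀‖ * (4 * C / ρ ^ 2 * ‖g‖)) := by
          apply mul_le_mul_of_nonneg_left _ (norm_nonneg _)
          exact mul_le_mul_of_nonneg_left (hb2 g z hz) (norm_nonneg _)
      _ = 4 * C / ρ ^ 2 * ‖z - s₀‖ ^ 2 * ‖g‖ := by ring
  -- conclude HasDerivAt
  have : HasDerivAt T D s₀ := by
    rw [hasDerivAt_iff_isLittleO]
    rw [Asymptotics.isLittleO_iff]
    intro c hc
    set KK : ℝ := 4 * C / ρ ^ 2 with hKK
    have hKKnn : 0 ≤ KK := by positivity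
    have hδ : 0 < min ρ (c / (KK + 1)) := lt_min hρ (by positivity)
    filter_upwards [Metric.closedBall_mem_nhds s₀ hδ] with z hz
    have hz1 : z ∈ closedBall s₀ ρ :=
      mem_closedBall.2 (le_trans (mem_closedBall.1 hz) (min_le_left _ _))
    have hz2 : ‖z - s₀‖ ≤ c / (KK + 1) := by
      rw [← dist_eq_norm]; exact le_trans (mem_closedBall.1 hz) (min_le_right _ _)
    calc ‖T z - T s₀ - (z - s₀) • D‖ ≤ KK * ‖z - s₀‖ ^ 2 := key z hz1
      _ = (KK * ‖z - s₀‖) * ‖z - s₀‖ := by ring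
      _ ≤ c * ‖z - s₀‖ := by
          apply mul_le_mul_of_nonneg_right _ (norm_nonneg _)
          calc KK * ‖z - s₀‖ ≤ KK * (c / (KK + 1)) :=
                mul_le_mul_of_nonneg_left hz2 hKKnn
            _ ≤ c := by
                rw [div_eq_inv_mul, ← mul_assoc]
                have : KK * (KK + 1)⁻¹ ≤ 1 := by
                  rw [mul_inv_le_iff₀ (by positivity)]; linarith
                nlinarith
  exact this.differentiableAt


/-- If `s ↦ T_s` is a pointwise-holomorphic family of continuous linear operators `F → E`
on an open set `M ⊆ ℂ` and `(s, k) ↦ f_{s,k} ∈ F` is continuous on `M × K` and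
holomorphic in `s` for each fixed `k`, then `(s, k) ↦ T_s(f_{s,k})` is continuous on
`M × K` and holomorphic in `s` for each fixed `k` (Banach space case). -/
theorem stmt5 {F E : Type*}
    [NormedAddCommGroup F] [NormedSpace ℂ F] [CompleteSpace F]
    [NormedAddCommGroup E] [NormedSpace ℂ E] [CompleteSpace E]
    {K : Type*} [TopologicalSpace K]
    (M : Set ℂ) (hM : IsOpen M)
    (T : ℂ → F →L[ℂ] E)
    (hT : ∀ f : F, DifferentiableOn ℂ (fun s => T s f) M)
    (f : ℂ → K → F)
    (hfc : ContinuousOn (fun p : ℂ × K => f p.1 p.2) (M ×ˢ (Set.univ : Set K)))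
    (hfh : ∀ k : K, DifferentiableOn ℂ (fun s => f s k) M) :
    ContinuousOn (fun p : ℂ × K => T p.1 (f p.1 p.2)) (M ×ˢ (Set.univ : Set K)) ∧
    ∀ k : K, DifferentiableOn ℂ (fun s => T s (f s k)) M := by
  have hTd : DifferentiableOn ℂ T M := holo_clm M hM T hT
  constructor
  · have hTc : ContinuousOn (fun p : ℂ × K => T p.1) (M ×ˢ (Set.univ : Set K)) :=
      hTd.continuousOn.comp continuous_fst.continuousOn (fun p hp => hp.1)
    exact hTc.clm_apply hfc
  · exact fun k => hTd.clm_apply (hfh k)
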